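/- Let X be a reflexive real Banach space and T : X ⇉ X* a non-enlargeable maximal monotone operator with (0, 0) ∈ T. Then the set A = T^⊢ is self-cancelling, A ⊂ T, T = A^⊢, every self-cancelling set B ⊂ T satisfies B ⊂ A (i.e. A is the maximal self-cancelling operator contained in T), and A is maximal with respect to inclusion in the family of subsets B ⊂ X × X* with T = B^⊢. -/

import Mathlib

/-- A subset of `X × X*` is monotone if `⟨x - y, x* - y*⟩ ≥ 0` for all its pairs of points. -/
def IsMonotoneSet {X : Type*} [NormedAddCommGroup X] [NormedSpace ℝ X]
    (T : Set (X × (X →L[ℝ] ℝ))) : Prop :=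
  ∀ p ∈ T, ∀ q ∈ T, 0 ≤ (p.2 - q.2) (p.1 - q.1)

/-- A subset of `X × X*` is maximal monotone if it is monotone and maximal with respect
to inclusion among monotone subsets. -/
def IsMaximalMonotone {X : Type*} [NormedAddCommGroup X] [NormedSpace ℝ X]
    (T : Set (X × (X →L[ℝ] ℝ))) : Prop :=
  IsMonotoneSet T ∧ ∀ S, IsMonotoneSet S → T ⊆ S → S = T

/-- The ε-enlargement of `T : X ⇉ X*`. -/
def enlargement {X : Type*} [NormedAddCommGroup X] [NormedSpace ℝ X]
    (T : Set (X × (X →L[ℝ] ℝ))) (ε : ℝ) : Set (X × (X →L[ℝ] ℝ)) :=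
  {p | ∀ q ∈ T, (p.2 - q.2) (p.1 - q.1) ≥ -ε}

/-- `B^⊢ = {(y, y*) : ⟨x, y*⟩ + ⟨y, x*⟩ = 0 for all (x, x*) ∈ B}`. -/
def vdash {X : Type*} [NormedAddCommGroup X] [NormedSpace ℝ X]
    (B : Set (X × (X →L[ℝ] ℝ))) : Set (X × (X →L[ℝ] ℝ)) :=
  {q | ∀ p ∈ B, p.2 q.1 + q.2 p.1 = 0}

/-- `A ⊆ X × X*` is self-cancelling if it is a linear subspace of `X × X*` and the
duality product vanishes on it. -/
def IsSelfCancelling {X : Type*} [NormedAddCommGroup X] [NormedSpace ℝ X]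
    (A : Set (X × (X →L[ℝ] ℝ))) : Prop :=
  (∃ S : Submodule ℝ (X × (X →L[ℝ] ℝ)), A = ↑S) ∧ ∀ p ∈ A, p.2 p.1 = 0

set_option maxHeartbeats 1000000 in
/-- For a non-enlargeable maximal monotone `T : X ⇉ X*` on a reflexive real Banach
space with `(0, 0) ∈ T`, the set `A = T^⊢` is self-cancelling, `A ⊆ T`, `T = A^⊢`,
`A` contains every self-cancelling subset of `T`, and `A` is maximal among the sets
`B` with `T = B^⊢`. -/
theorem vdash_of_nonEnlargeable {X : Type*}
    [NormedAddCommGroup X] [NormedSpace ℝ X] [CompleteSpace X]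
    (hrefl : Function.Surjective (NormedSpace.inclusionInDoubleDual ℝ X))
    (T : Set (X × (X →L[ℝ] ℝ))) (hT : IsMaximalMonotone T)
    (hne : ∀ ε : ℝ, 0 ≤ ε → enlargement T ε = T) (h0 : (0, 0) ∈ T) :
    IsSelfCancelling (vdash T) ∧ vdash T ⊆ T ∧ T = vdash (vdash T) ∧
      (∀ B, IsSelfCancelling B → B ⊆ T → B ⊆ vdash T) ∧
      (∀ B : Set (X × (X →L[ℝ] ℝ)), T = vdash B → vdash T ⊆ B → B = vdash T) := by
  classical
  obtain ⟨hmono, hmax⟩ := hT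
  classical
  -- no alias
  -- expansion lemma
  have hpair : ∀ a b : X × (X →L[ℝ] ℝ), (a.2 - b.2) (a.1 - b.1) = a.2 a.1 - a.2 b.1 - b.2 a.1 + b.2 b.1 := by
    intro a b
    simp only [ContinuousLinearMap.sub_apply, map_sub]; ring
  have hmem : ∀ (p : X × (X →L[ℝ] ℝ)) (ε : ℝ), 0 ≤ ε →
      (∀ q ∈ T, -ε ≤ (p.2 - q.2) (p.1 - q.1)) → p ∈ T := by
    intro p ε hε h
    rw [← hne ε hε]
    exact fun q hq => h q hq
  have hmonoE : ∀ p ∈ T, ∀ q ∈ T,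
      0 ≤ p.2 p.1 - p.2 q.1 - q.2 p.1 + q.2 q.1 := by
    intro p hp q hq
    have := hmono p hp q hq
    rwa [hpair] at this
  have hpos : ∀ p ∈ T, 0 ≤ p.2 p.1 := by
    intro p hp
    have := hmonoE p hp (0, 0) h0
    simpa using this
  -- convex combinations with 0: s•p + t•q ∈ T for s,t ≥ 0, s+t ≤ 1
  have hconv2 : ∀ p ∈ T, ∀ q ∈ T, ∀ s t : ℝ, 0 ≤ s → 0 ≤ t → s + t ≤ 1 →
      s • p + t • q ∈ T := by
    intro p hp q hq s t hs ht hst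
    have hApq := hmonoE p hp q hq
    have hfp := hpos p hp
    have hfq := hpos q hq
    refine hmem _ (s*t*(p.2 p.1 - p.2 q.1 - q.2 p.1 + q.2 q.1)
      + s*(1-s-t)*(p.2 p.1) + t*(1-s-t)*(q.2 q.1)) ?_ ?_
    · have h1 : 0 ≤ s*t*(p.2 p.1 - p.2 q.1 - q.2 p.1 + q.2 q.1) :=
        mul_nonneg (mul_nonneg hs ht) hApq
      have h2 : 0 ≤ s*(1-s-t)*(p.2 p.1) :=
        mul_nonneg (mul_nonneg hs (by linarith)) hfp
      have h3 : 0 ≤ t*(1-s-t)*(q.2 q.1) :=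
        mul_nonneg (mul_nonneg ht (by linarith)) hfq
      linarith
    · intro r hr
      have hApr := hmonoE p hp r hr
      have hAqr := hmonoE q hq r hr
      have hfr := hpos r hr
      have hexp : ((s • p + t • q).2 - r.2) ((s • p + t • q).1 - r.1) =
          s^2 * p.2 p.1 + s*t*(p.2 q.1 + q.2 p.1) + t^2 * q.2 q.1
          - s * (p.2 r.1 + r.2 p.1) - t * (q.2 r.1 + r.2 q.1) + r.2 r.1 := by
        simp only [Prod.fst_add, Prod.snd_add, Prod.smul_fst, Prod.smul_snd,
          ContinuousLinearMap.sub_apply, ContinuousLinearMap.add_apply,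
          ContinuousLinearMap.smul_apply, map_sub, map_add, map_smul, smul_eq_mul]
        ring
      rw [hexp]
      nlinarith [mul_nonneg hs hApr, mul_nonneg ht hAqr,
        mul_nonneg (by linarith : (0:ℝ) ≤ 1 - s - t) hfr]
  have hzero : (0 : X × (X →L[ℝ] ℝ)) ∈ T := by
    exact h0
  have hsmul01 : ∀ p ∈ T, ∀ s : ℝ, 0 ≤ s → s ≤ 1 → s • p ∈ T := by
    intro p hp s hs hs1
    have := hconv2 p hp p hp s 0 hs le_rfl (by linarith)
    simpa using this
  -- additive closure
  have hadd : ∀ p ∈ T, ∀ q ∈ T, p + q ∈ T := by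
    intro p hp q hq
    have hm : (1/2 : ℝ) • p + (1/2 : ℝ) • q ∈ T :=
      hconv2 p hp q hq _ _ (by norm_num) (by norm_num) (by norm_num)
    refine hmem _ 0 le_rfl ?_
    intro r hr
    have h2 := hmonoE _ hm ((1/2 : ℝ) • r) (hsmul01 r hr _ (by norm_num) (by norm_num))
    simp only [Prod.fst_add, Prod.snd_add, Prod.smul_fst, Prod.smul_snd,
      ContinuousLinearMap.sub_apply, ContinuousLinearMap.add_apply,
      ContinuousLinearMap.smul_apply, map_sub, map_add, map_smul, smul_eq_mul] at h2 ⊢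
    linarith
  have hneg : ∀ p ∈ T, -p ∈ T := by
    intro p hp
    refine hmem _ 0 le_rfl ?_
    intro r hr
    have h2 := hpos _ (hconv2 p hp r hr _ _ (by norm_num : (0:ℝ) ≤ 1/2) (by norm_num : (0:ℝ) ≤ 1/2) (by norm_num))
    simp only [Prod.fst_add, Prod.snd_add, Prod.smul_fst, Prod.smul_snd, Prod.fst_neg,
      Prod.snd_neg, ContinuousLinearMap.sub_apply, ContinuousLinearMap.add_apply,
      ContinuousLinearMap.neg_apply, ContinuousLinearMap.smul_apply,
      map_sub, map_add, map_neg, map_smul, smul_eq_mul] at h2 ⊢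
    linarith
  have hnsmul : ∀ n : ℕ, ∀ p ∈ T, (n : ℝ) • p ∈ T := by
    intro n
    induction n with
    | zero => intro p hp; simpa using hzero
    | succ n ih =>
      intro p hp
      have : ((n+1 : ℕ) : ℝ) • p = (n : ℝ) • p + p := by
        push_cast
        rw [add_smul, one_smul]
      rw [this]
      exact hadd _ (ih p hp) p hp
  have hsmulall : ∀ (c : ℝ), ∀ p ∈ T, c • p ∈ T := by
    have key : ∀ (c : ℝ), 0 ≤ c → ∀ p ∈ T, c • p ∈ T := by
      intro c hc p hp
      set n : ℕ := ⌈c⌉₊ + 1 with hn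
      have hnpos : (0:ℝ) < n := by positivity
      have hcn : c ≤ n := by
        calc c ≤ ⌈c⌉₊ := Nat.le_ceil c
        _ ≤ n := by exact_mod_cast Nat.le_succ _
      have h1 : (c / n) • p ∈ T :=
        hsmul01 p hp _ (div_nonneg hc hnpos.le) (by rw [div_le_one hnpos]; exact hcn)
      have := hnsmul n _ h1
      rwa [smul_smul, mul_div_cancel₀ _ hnpos.ne'] at this
    intro c p hp
    rcases le_or_gt 0 c with hc | hc
    · exact key c hc p hp
    · have := hneg _ (key (-c) (by linarith) p hp)
      convert this using 1
      ext <;> simp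
  -- T is closed
  have hclosed : IsClosed T := by
    rw [← hne 0 le_rfl]
    show IsClosed {p : X × (X →L[ℝ] ℝ) | ∀ q ∈ T, (p.2 - q.2) (p.1 - q.1) ≥ -(0:ℝ)}
    have : {p : X × (X →L[ℝ] ℝ) | ∀ q ∈ T, (p.2 - q.2) (p.1 - q.1) ≥ -(0:ℝ)} =
        ⋂ q ∈ T, {p : X × (X →L[ℝ] ℝ) | -(0:ℝ) ≤ (p.2 - q.2) (p.1 - q.1)} := by
      ext p; simp [Set.mem_iInter₂]
    rw [this]
    refine isClosed_biInter fun q hq => isClosed_le continuous_const ?_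
    exact isBoundedBilinearMap_apply.continuous.comp
      ((continuous_snd.sub continuous_const).prodMk (continuous_fst.sub continuous_const))
  -- convexity
  have hconvex : Convex ℝ T := fun p hp q hq a b ha hb hab =>
    hconv2 p hp q hq a b ha hb (le_of_eq hab)
  -- vdash T ⊆ T
  have hvdsub : vdash T ⊆ T := by
    intro w hw
    refine hmem _ (max 0 (-(w.2 w.1))) (le_max_left _ _) ?_
    intro q hq
    have h1 := hw q hq
    rw [hpair]
    have h2 := hpos q hq
    have h3 := le_max_right 0 (-(w.2 w.1))
    linarith
  -- vdash T is self cancelling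
  have hself : IsSelfCancelling (vdash T) := by
    constructor
    · refine ⟨{ carrier := vdash T, add_mem' := ?_, zero_mem' := ?_, smul_mem' := ?_ }, rfl⟩
      · intro a b ha hb p hp
        have h1 := ha p hp
        have h2 := hb p hp
        simp only [Prod.fst_add, Prod.snd_add, ContinuousLinearMap.add_apply, map_add]
        linarith
      · intro p hp
        simp
      · intro c a ha p hp
        have h1 := ha p hp
        simp only [Prod.smul_fst, Prod.smul_snd, ContinuousLinearMap.smul_apply,
          map_smul, smul_eq_mul]
        linear_combination c * h1
    · intro w hw
      have hwT := hvdsub hw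
      have := hw w hwT
      linarith
  -- T ⊆ vdash (vdash T)
  have hTsub : T ⊆ vdash (vdash T) := by
    intro p hp u hu
    have := hu p hp
    linarith
  -- vdash (vdash T) ⊆ T  (Hahn-Banach + reflexivity)
  have hvdvd : vdash (vdash T) ⊆ T := by
    intro w hw
    by_contra hwT
    obtain ⟨g, u, hgw, hgT⟩ := geometric_hahn_banach_point_closed hconvex hclosed hwT
    have hu0 : u < 0 := by simpa using hgT 0 hzero
    have hg0 : ∀ b ∈ T, g b = 0 := by
      intro b hb
      by_contra hb0
      have := hgT (((u - 1) / g b) • b) (hsmulall _ b hb)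
      rw [map_smul, smul_eq_mul, div_mul_cancel₀ _ hb0] at this
      linarith
    set g₁ : X →L[ℝ] ℝ := g.comp (ContinuousLinearMap.inl ℝ X (X →L[ℝ] ℝ)) with hg₁
    set g₂ : (X →L[ℝ] ℝ) →L[ℝ] ℝ := g.comp (ContinuousLinearMap.inr ℝ X (X →L[ℝ] ℝ)) with hg₂
    have hdec : ∀ v : X × (X →L[ℝ] ℝ), g v = g₁ v.1 + g₂ v.2 := by
      intro v
      have hv : v = (v.1, (0 : X →L[ℝ] ℝ)) + ((0 : X), v.2) := by
        ext <;> simp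
      rw [hg₁, hg₂]
      simp only [ContinuousLinearMap.comp_apply, ContinuousLinearMap.inl_apply,
        ContinuousLinearMap.inr_apply]
      conv_lhs => rw [hv]
      rw [map_add]
    obtain ⟨y, hy⟩ := hrefl g₂
    have hyapp : ∀ f : X →L[ℝ] ℝ, g₂ f = f y := by
      intro f
      rw [← hy]
      rfl
    have huvd : ((y, g₁) : X × (X →L[ℝ] ℝ)) ∈ vdash T := by
      intro p hp
      have h1 := hg0 p hp
      rw [hdec p] at h1
      have h2 := hyapp p.2
      simp only
      linarith
    have := hw _ huvd
    simp only at this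
    rw [← hyapp w.2] at this
    rw [← hdec w] at this
    linarith
  -- every self-cancelling subset of T is in vdash T
  have hC4 : ∀ B, IsSelfCancelling B → B ⊆ T → B ⊆ vdash T := by
    rintro B ⟨⟨S', hS'⟩, hB0⟩ hBT w hw p hp
    by_contra hc
    have htw : ∀ t : ℝ, t • w ∈ T := by
      intro t
      apply hBT
      rw [hS'] at hw ⊢
      exact Submodule.smul_mem S' t hw
    have hmt := hmonoE p hp (((p.2 p.1 + 1)/(p.2 w.1 + w.2 p.1)) • w) (htw _)
    simp only [Prod.smul_fst, Prod.smul_snd, ContinuousLinearMap.smul_apply,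
      map_smul, smul_eq_mul] at hmt
    rw [hB0 w hw] at hmt
    simp only [mul_zero, add_zero] at hmt
    have h2 := div_mul_cancel₀ (p.2 p.1 + 1) hc
    nlinarith [hmt, h2]
  -- maximality among B with T = vdash B
  have hC5 : ∀ B : Set (X × (X →L[ℝ] ℝ)), T = vdash B → vdash T ⊆ B → B = vdash T := by
    intro B hTB hsub
    refine Set.Subset.antisymm ?_ hsub
    intro w hw p hp
    have hp' : p ∈ vdash B := hTB ▸ hp
    have := hp' w hw
    linarith
  exact ⟨hself, hvdsub, Set.Subset.antisymm hTsub hvdvd, hC4, hC5⟩
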